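/- Let I ⊆ ℂ[z₁,…,z_d] be a radical homogeneous ideal and let B be the ball algebra on the closed unit ball of ℂ^d. If f ∈ B satisfies f(z) = 0 for every z ∈ V(I) ∩ 𝔹_d (the intersection of the zero locus of I with the open unit ball), then f lies in the closure in B of the set of restrictions of polynomials in I. -/

import Mathlib

open MvPolynomial Metric

noncomputable section

abbrev Cd (d : ℕ) := EuclideanSpace ℂ (Fin d)

abbrev CBall (d : ℕ) : Set (Cd d) := Metric.closedBall (0 : Cd d) 1

instance (d : ℕ) : CompactSpace (CBall d) :=
  isCompact_iff_compactSpace.mp (isCompact_closedBall _ _)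

/-- The `i`-th coordinate function on the closed unit ball. -/
def coordFn (d : ℕ) (i : Fin d) : C(CBall d, ℂ) :=
  ⟨fun z => (z : Cd d) i, by first | fun_prop | exact (continuous_apply i).comp ((PiLp.continuous_ofLp 2 _).comp continuous_subtype_val)⟩

/-- Restriction of a polynomial to the closed unit ball, as an element of
`C(closedBall, ℂ)`. -/
def polyMap (d : ℕ) : MvPolynomial (Fin d) ℂ →ₐ[ℂ] C(CBall d, ℂ) :=
  aeval (coordFn d)

/-- The ball algebra: the closure, in the Banach algebra of continuous functions on
the closed unit ball of ℂ^d with the supremum norm, of the restrictions of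
polynomials. -/
def ballAlg (d : ℕ) : Set C(CBall d, ℂ) := closure (Set.range (polyMap d))

/-- `J` is an ideal of the ball algebra `B`. -/
def IsIdealOfBallAlg (d : ℕ) (J : Set C(CBall d, ℂ)) : Prop :=
  J ⊆ ballAlg d ∧ (0 : C(CBall d, ℂ)) ∈ J ∧
    (∀ f ∈ J, ∀ g ∈ J, f + g ∈ J) ∧ (∀ f ∈ J, ∀ g ∈ ballAlg d, g * f ∈ J)

/-- The self-map of the closed ball given by `z ↦ t z` for `‖t‖ ≤ 1`. -/
def dilatePt (d : ℕ) (t : ℂ) (ht : ‖t‖ ≤ 1) : C(CBall d, CBall d) :=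
  ⟨fun z => ⟨t • (z : Cd d), by
      have hz : ‖(z : Cd d)‖ ≤ 1 := mem_closedBall_zero_iff.mp z.2
      show t • (z : Cd d) ∈ Metric.closedBall 0 1
      rw [mem_closedBall_zero_iff, norm_smul]
      exact mul_le_one₀ ht (norm_nonneg _) hz⟩,
    by exact Continuous.subtype_mk (continuous_subtype_val.const_smul t) _⟩

/-- The dilation `f ↦ (z ↦ f (t z))` on continuous functions on the closed ball. -/
def dilateFn (d : ℕ) (t : ℂ) (ht : ‖t‖ ≤ 1) (f : C(CBall d, ℂ)) : C(CBall d, ℂ) :=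
  f.comp (dilatePt d t ht)

/-- A closed ideal of the ball algebra is homogeneous if it is invariant under all
dilations `z ↦ t z`, `|t| < 1`. -/
def IsHomogBallIdeal (d : ℕ) (J : Set C(CBall d, ℂ)) : Prop :=
  ∀ f ∈ J, ∀ t : ℂ, ∀ ht : ‖t‖ < 1, dilateFn d t ht.le f ∈ J

/-- An ideal of polynomials is homogeneous if it contains the homogeneous
components of each of its elements. -/
def IsHomogeneousIdeal {d : ℕ} (I : Ideal (MvPolynomial (Fin d) ℂ)) : Prop :=
  ∀ p ∈ I, ∀ n : ℕ, homogeneousComponent n p ∈ I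

namespace Stmt14Aux

open Complex Real intervalIntegral Finset

lemma eval_smul_hom {σ : Type*} [Fintype σ] {n : ℕ} {p : MvPolynomial σ ℂ}
    (hp : p.IsHomogeneous n) (t : ℂ) (x : σ → ℂ) :
    eval (fun i => t * x i) p = t ^ n * eval x p := by
  rw [eval_eq', eval_eq', Finset.mul_sum]
  apply Finset.sum_congr rfl
  intro s hs
  have hdeg : ∑ i, s i = n := by
    have h1 := hp (mem_support_iff.mp hs)
    have h2 : Finsupp.weight 1 s = Finsupp.degree s :=
      (DFunLike.congr_fun Finsupp.degree_eq_weight_one s).symm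
    rw [h2] at h1
    rw [← h1, Finsupp.degree]
    exact (Finset.sum_subset (Finset.subset_univ _)
      (fun i _ hi => Finsupp.notMem_support_iff.mp hi)).symm
  calc coeff s p * ∏ i, (t * x i) ^ s i
      = coeff s p * ((∏ i, t ^ s i) * ∏ i, x i ^ s i) := by
        rw [← Finset.prod_mul_distrib]; simp [mul_pow]
    _ = t ^ n * (coeff s p * ∏ i, x i ^ s i) := by
        rw [Finset.prod_pow_eq_pow_sum, hdeg]; ring

lemma sum_hc {σ : Type*} (p : MvPolynomial σ ℂ) {N : ℕ} (hN : p.totalDegree < N) :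
    ∑ k ∈ Finset.range N, homogeneousComponent k p = p := by
  conv_rhs => rw [← MvPolynomial.sum_homogeneousComponent p]
  refine (Finset.sum_subset ?_ ?_).symm
  · intro k hk
    simp only [Finset.mem_range] at hk ⊢
    omega
  · intro k _ hk
    simp only [Finset.mem_range, not_lt] at hk
    exact homogeneousComponent_eq_zero _ _ (by omega)

lemma eval_expand {σ : Type*} [Fintype σ] (p : MvPolynomial σ ℂ) (t : ℂ) (x : σ → ℂ)
    {N : ℕ} (hN : p.totalDegree < N) :
    eval (fun i => t * x i) p
      = ∑ k ∈ Finset.range N, t ^ k * eval x (homogeneousComponent k p) := by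
  conv_lhs => rw [← sum_hc p hN]
  rw [map_sum]
  apply Finset.sum_congr rfl
  intro k _
  rw [eval_smul_hom (homogeneousComponent_isHomogeneous k p) t x]

lemma integral_exp_orth (m k : ℕ) :
    (∫ θ in (0:ℝ)..(2*π), Complex.exp (-(k:ℂ)*θ*Complex.I) * Complex.exp ((m:ℂ)*θ*Complex.I))
      = if m = k then ((2*π : ℝ) : ℂ) else 0 := by
  have key : ∀ θ : ℝ, Complex.exp (-(k:ℂ)*θ*Complex.I) * Complex.exp ((m:ℂ)*θ*Complex.I)
      = Complex.exp ((((m:ℂ)-k)*Complex.I) * θ) := by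
    intro θ; rw [← Complex.exp_add]; ring_nf
  simp only [key]
  by_cases h : m = k
  · subst h
    simp [intervalIntegral.integral_const]
  · rw [if_neg h]
    have hc : ((m:ℂ)-k)*Complex.I ≠ 0 := by
      apply mul_ne_zero _ Complex.I_ne_zero
      rw [sub_ne_zero]
      exact_mod_cast fun hmk => h (Nat.cast_injective hmk)
    rw [integral_exp_mul_complex hc]
    have h2 : ((m:ℂ) - k) * Complex.I * ((2*π:ℝ):ℂ) = (((m:ℤ) - k : ℤ):ℂ) * (2*(π:ℝ)*Complex.I) := by
      push_cast; ring
    rw [h2, Complex.exp_int_mul_two_pi_mul_I]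
    simp

variable {d : ℕ}

lemma polyMap_apply (d : ℕ) (p : MvPolynomial (Fin d) ℂ) (z : CBall d) :
    polyMap d p z = eval (fun i => (z : Cd d) i) p := by
  induction p using MvPolynomial.induction_on with
  | C a => simp [polyMap]
  | add p q hp hq => simp [map_add, hp, hq]
  | mul_X p i hp =>
    rw [map_mul, ContinuousMap.mul_apply, hp, eval_mul, eval_X]
    congr 1
    show (aeval (coordFn d)) (X i) z = (z : Cd d) i
    rw [aeval_X]
    rfl

lemma zero_cone {I : Ideal (MvPolynomial (Fin d) ℂ)} (hhom : IsHomogeneousIdeal I)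
    (x : Fin d → ℂ) (hx : ∀ p ∈ I, eval x p = 0) (t : ℂ) :
    ∀ p ∈ I, eval (fun i => t * x i) p = 0 := by
  intro p hp
  rw [eval_expand p t x (Nat.lt_succ_self _)]
  refine Finset.sum_eq_zero fun k _ => ?_
  rw [hx _ (hhom p hp k), mul_zero]

/-- rotation of the ball -/
def rotPt (d : ℕ) (θ : ℝ) : C(CBall d, CBall d) :=
  dilatePt d (Complex.exp (θ * Complex.I))
    (le_of_eq (by rw [Complex.norm_exp_ofReal_mul_I]))

lemma rotPt_coe (θ : ℝ) (z : CBall d) :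
    ((rotPt d θ z : CBall d) : Cd d) = Complex.exp (θ * Complex.I) • (z : Cd d) := rfl

lemma cont_rot (g : C(CBall d, ℂ)) :
    Continuous fun q : CBall d × ℝ => g (rotPt d q.2 q.1) := by
  apply g.continuous.comp
  apply continuous_induced_rng.2
  exact show Continuous fun q : CBall d × ℝ =>
      Complex.exp ((q.2 : ℂ) * Complex.I) • (q.1 : Cd d) from
    (Complex.continuous_exp.comp
      ((Complex.continuous_ofReal.comp continuous_snd).mul continuous_const)).smul
      (continuous_subtype_val.comp continuous_fst)

lemma cont_rot_theta (g : C(CBall d, ℂ)) (z : CBall d) (k : ℕ) :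
    Continuous fun θ : ℝ => Complex.exp (-(k:ℂ)*θ*Complex.I) * g (rotPt d θ z) := by
  apply Continuous.mul
  · apply Complex.continuous_exp.comp
    exact (continuous_const.mul Complex.continuous_ofReal).mul continuous_const
  · apply g.continuous.comp
    apply continuous_induced_rng.2
    exact show Continuous fun θ : ℝ => Complex.exp ((θ:ℂ) * Complex.I) • (z : Cd d) from
      (Complex.continuous_exp.comp (Complex.continuous_ofReal.mul continuous_const)).smul
        continuous_const

/-- The `k`-th Fourier coefficient operator on `C(CBall d, ℂ)`. -/
def Fk (d k : ℕ) (g : C(CBall d, ℂ)) : C(CBall d, ℂ) :=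
  ⟨fun z => ((2*π : ℝ) : ℂ)⁻¹ *
      ∫ θ in (0:ℝ)..(2*π), Complex.exp (-(k:ℂ)*θ*Complex.I) * g (rotPt d θ z), by
    apply continuous_const.mul
    exact intervalIntegral.continuous_parametric_intervalIntegral_of_continuous'
      (μ := MeasureTheory.volume) (f := fun z θ => Complex.exp (-(k:ℂ)*θ*Complex.I) * g (rotPt d θ z))
      (by
        have : Function.uncurry (fun (z : CBall d) (θ : ℝ) =>
              Complex.exp (-(k:ℂ)*θ*Complex.I) * g (rotPt d θ z))
            = fun q : CBall d × ℝ =>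
              Complex.exp (-(k:ℂ)*q.2*Complex.I) * g (rotPt d q.2 q.1) := rfl
        rw [this]
        apply Continuous.mul
        · apply Complex.continuous_exp.comp
          exact (continuous_const.mul (Complex.continuous_ofReal.comp continuous_snd)).mul
            continuous_const
        · exact cont_rot g) 0 (2*π)⟩

lemma Fk_apply (d k : ℕ) (g : C(CBall d, ℂ)) (z : CBall d) :
    Fk d k g z = ((2*π : ℝ) : ℂ)⁻¹ *
      ∫ θ in (0:ℝ)..(2*π), Complex.exp (-(k:ℂ)*θ*Complex.I) * g (rotPt d θ z) := rfl

lemma Fk_sub (d k : ℕ) (g h : C(CBall d, ℂ)) :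
    Fk d k (g - h) = Fk d k g - Fk d k h := by
  ext z
  simp only [Fk_apply, ContinuousMap.sub_apply]
  rw [← mul_sub, ← intervalIntegral.integral_sub
    ((cont_rot_theta g z k).intervalIntegrable _ _)
    ((cont_rot_theta h z k).intervalIntegrable _ _)]
  congr 1
  apply intervalIntegral.integral_congr
  intro θ _
  simp [ContinuousMap.sub_apply, mul_sub]

lemma norm_Fk_le (d k : ℕ) (g : C(CBall d, ℂ)) : ‖Fk d k g‖ ≤ ‖g‖ := by
  rw [ContinuousMap.norm_le _ (norm_nonneg g)]
  intro z
  rw [Fk_apply, norm_mul]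
  have h1 : ‖∫ θ in (0:ℝ)..(2*π), Complex.exp (-(k:ℂ)*θ*Complex.I) * g (rotPt d θ z)‖
      ≤ ‖g‖ * |2*π - 0| := by
    apply intervalIntegral.norm_integral_le_of_norm_le_const
    intro θ _
    rw [norm_mul]
    have : ‖Complex.exp (-(k:ℂ)*θ*Complex.I)‖ = 1 := by
      rw [Complex.norm_exp]
      simp
    rw [this, one_mul]
    exact g.norm_coe_le_norm _
  have h2 : ‖((2*π : ℝ) : ℂ)⁻¹‖ = (2*π)⁻¹ := by
    rw [norm_inv, Complex.norm_real, Real.norm_eq_abs, abs_of_pos (by positivity)]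
  rw [h2]
  calc (2*π)⁻¹ * ‖∫ θ in (0:ℝ)..(2*π), Complex.exp (-(k:ℂ)*θ*Complex.I) * g (rotPt d θ z)‖
      ≤ (2*π)⁻¹ * (‖g‖ * |2*π - 0|) := by
        apply mul_le_mul_of_nonneg_left h1 (by positivity)
    _ = ‖g‖ := by
        rw [sub_zero, abs_of_pos (show (0:ℝ) < 2*π by positivity), mul_comm ‖g‖,
          ← mul_assoc, inv_mul_cancel₀ (show (2*π : ℝ) ≠ 0 by positivity), one_mul]

lemma Fk_polyMap (d k : ℕ) (p : MvPolynomial (Fin d) ℂ) :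
    Fk d k (polyMap d p) = polyMap d (homogeneousComponent k p) := by
  ext z
  rw [Fk_apply, polyMap_apply]
  set N := max (p.totalDegree + 1) (k+1) with hNdef
  have hN : p.totalDegree < N := lt_of_lt_of_le (Nat.lt_succ_self _) (le_max_left _ _)
  have hkN : k ∈ Finset.range N := Finset.mem_range.2 (lt_of_lt_of_le (Nat.lt_succ_self _)
    (le_max_right _ _))
  have key : ∀ θ : ℝ, Complex.exp (-(k:ℂ)*θ*Complex.I) * (polyMap d p) (rotPt d θ z)
      = ∑ m ∈ Finset.range N,
          (Complex.exp (-(k:ℂ)*θ*Complex.I) * Complex.exp ((m:ℂ)*θ*Complex.I))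
            * eval (fun i => (z : Cd d) i) (homogeneousComponent m p) := by
    intro θ
    rw [polyMap_apply]
    have hcoord : (fun i => ((rotPt d θ z : CBall d) : Cd d) i)
        = fun i => Complex.exp ((θ:ℂ) * Complex.I) * (z : Cd d) i := rfl
    rw [hcoord, eval_expand p _ _ hN, Finset.mul_sum]
    apply Finset.sum_congr rfl
    intro m _
    have hexp : Complex.exp ((θ:ℂ) * Complex.I) ^ m = Complex.exp ((m:ℂ)*θ*Complex.I) := by
      rw [← Complex.exp_nat_mul]; ring_nf
    rw [hexp]; ring
  simp only [key]
  rw [intervalIntegral.integral_finset_sum]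
  · have : ∀ m ∈ Finset.range N,
        (∫ θ in (0:ℝ)..(2*π),
          (Complex.exp (-(k:ℂ)*θ*Complex.I) * Complex.exp ((m:ℂ)*θ*Complex.I))
            * eval (fun i => (z : Cd d) i) (homogeneousComponent m p))
        = (if m = k then ((2*π : ℝ) : ℂ) else 0)
            * eval (fun i => (z : Cd d) i) (homogeneousComponent m p) := by
      intro m _
      rw [intervalIntegral.integral_mul_const, integral_exp_orth]
    rw [Finset.sum_congr rfl this]
    simp only [ite_mul, zero_mul]
    rw [Finset.sum_ite_eq' (Finset.range N) k]
    rw [if_pos hkN]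
    rw [← mul_assoc, inv_mul_cancel₀ (by
      simp only [ne_eq, Complex.ofReal_eq_zero]
      positivity), one_mul]
  · intro m _
    apply Continuous.intervalIntegrable
    apply Continuous.mul _ continuous_const
    apply Continuous.mul
    · apply Complex.continuous_exp.comp
      exact (continuous_const.mul Complex.continuous_ofReal).mul continuous_const
    · apply Complex.continuous_exp.comp
      exact (continuous_const.mul Complex.continuous_ofReal).mul continuous_const

end Stmt14Aux

namespace Stmt14Aux

open Complex Real Finset

variable {d : ℕ}

lemma dilate_sub (t : ℂ) (ht : ‖t‖ ≤ 1) (g h : C(CBall d, ℂ)) :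
    dilateFn d t ht (g - h) = dilateFn d t ht g - dilateFn d t ht h :=
  ContinuousMap.sub_comp _ _ _

lemma dilate_norm_le (t : ℂ) (ht : ‖t‖ ≤ 1) (g : C(CBall d, ℂ)) :
    ‖dilateFn d t ht g‖ ≤ ‖g‖ := by
  rw [ContinuousMap.norm_le _ (norm_nonneg g)]
  intro z
  exact g.norm_coe_le_norm _

lemma dilate_poly (t : ℂ) (ht : ‖t‖ ≤ 1) (p : MvPolynomial (Fin d) ℂ) {N : ℕ}
    (hN : p.totalDegree < N) :
    dilateFn d t ht (polyMap d p)
      = ∑ k ∈ Finset.range N, t ^ k • polyMap d (homogeneousComponent k p) := by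
  ext z
  show (polyMap d p) (dilatePt d t ht z) = _
  rw [polyMap_apply]
  have hcoord : (fun i => ((dilatePt d t ht z : CBall d) : Cd d) i)
      = fun i => t * (z : Cd d) i := rfl
  rw [hcoord, eval_expand p t _ hN]
  simp only [ContinuousMap.coe_sum, ContinuousMap.coe_smul, Finset.sum_apply, Pi.smul_apply,
    smul_eq_mul, polyMap_apply]

lemma polyMap_C_mul (a : ℂ) (p : MvPolynomial (Fin d) ℂ) :
    polyMap d (C a * p) = a • polyMap d p := by
  rw [map_mul]
  have : polyMap d (C a) = algebraMap ℂ C(CBall d, ℂ) a := by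
    simp [polyMap]
  rw [this, Algebra.smul_def]

end Stmt14Aux

set_option maxHeartbeats 2000000 in
open Stmt14Aux Finset in
/-- If `I` is a radical homogeneous ideal of ℂ[z₁,…,z_d] and
`f` belongs to the ball algebra and vanishes at every point of `V(I) ∩ 𝔹_d`, then
`f` lies in the closure (in the ball algebra) of the restrictions of members of
`I`. -/
theorem stmt14 (d : ℕ) (I : Ideal (MvPolynomial (Fin d) ℂ))
    (hrad : I.IsRadical) (hhom : IsHomogeneousIdeal I)
    (f : C(CBall d, ℂ)) (hf : f ∈ ballAlg d)
    (hvanish : ∀ z : CBall d, ‖(z : Cd d)‖ < 1 →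
      (∀ p ∈ I, eval (fun i => (z : Cd d) i) p = 0) → f z = 0) :
    f ∈ closure (polyMap d '' (I : Set (MvPolynomial (Fin d) ℂ))) := by
  classical
  have hball : ∀ ε > 0, ∃ p : MvPolynomial (Fin d) ℂ, ‖f - polyMap d p‖ < ε := by
    intro ε hε
    obtain ⟨b, hb, hbd⟩ := Metric.mem_closure_iff.1 hf ε hε
    obtain ⟨p, rfl⟩ := hb
    exact ⟨p, by rwa [← dist_eq_norm]⟩
  -- Step 1: existence of homogeneous polynomials representing the Fourier coefficients of `f`
  have hFk : ∀ k : ℕ, ∃ h : MvPolynomial (Fin d) ℂ,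
      h.IsHomogeneous k ∧ polyMap d h = Stmt14Aux.Fk d k f := by
    intro k
    set T : Submodule ℂ C(CBall d, ℂ) :=
      Submodule.map (polyMap d).toLinearMap (homogeneousSubmodule (Fin d) ℂ k) with hT
    haveI : FiniteDimensional ℂ (homogeneousSubmodule (Fin d) ℂ k) := by
      have hle : homogeneousSubmodule (Fin d) ℂ k ≤ restrictTotalDegree (Fin d) ℂ k := by
        intro q hq
        rw [mem_restrictTotalDegree]
        exact ((mem_homogeneousSubmodule _ _).1 hq).totalDegree_le
      exact Submodule.finiteDimensional_of_le hle
    have hclosed : IsClosed (T : Set C(CBall d, ℂ)) := T.closed_of_finiteDimensional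
    have hmem : Stmt14Aux.Fk d k f ∈ (T : Set C(CBall d, ℂ)) := by
      rw [← hclosed.closure_eq]
      rw [Metric.mem_closure_iff]
      intro ε hε
      obtain ⟨p, hp⟩ := hball ε hε
      refine ⟨Stmt14Aux.Fk d k (polyMap d p), ?_, ?_⟩
      · rw [Fk_polyMap]
        exact Submodule.mem_map.2 ⟨homogeneousComponent k p,
          homogeneousComponent_isHomogeneous k p, rfl⟩
      · rw [dist_eq_norm, ← Fk_sub]
        exact lt_of_le_of_lt (norm_Fk_le d k _) hp
    obtain ⟨h, hh, hmap⟩ := Submodule.mem_map.1 hmem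
    exact ⟨h, hh, hmap⟩
  choose hk hkhom hkmap using hFk
  -- Step 2: the Fourier coefficients vanish on the variety, so `hk k ∈ I`
  have hFkvanish : ∀ k (z : CBall d), ‖(z : Cd d)‖ < 1 →
      (∀ p ∈ I, eval (fun i => (z : Cd d) i) p = 0) → Stmt14Aux.Fk d k f z = 0 := by
    intro k z hz hzV
    rw [Fk_apply]
    have hzero : ∀ θ ∈ Set.uIcc (0:ℝ) (2*Real.pi),
        Complex.exp (-(k:ℂ)*θ*Complex.I) * f (rotPt d θ z) = (fun _ : ℝ => (0:ℂ)) θ := by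
      intro θ _
      have h1 : f (rotPt d θ z) = 0 := by
        apply hvanish
        · rw [rotPt_coe, norm_smul]
          have : ‖Complex.exp ((θ:ℂ) * Complex.I)‖ = 1 := by
            rw [Complex.norm_exp_ofReal_mul_I]
          rw [this, one_mul]
          exact hz
        · intro p hp
          have h2 := zero_cone hhom (fun i => (z : Cd d) i) hzV
            (Complex.exp ((θ:ℂ)*Complex.I)) p hp
          exact h2
      rw [h1, mul_zero]
    rw [intervalIntegral.integral_congr hzero, intervalIntegral.integral_zero, mul_zero]
  have hkI : ∀ k, hk k ∈ I := by
    intro k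
    have hvan : ∀ x ∈ zeroLocus ℂ I, eval x (hk k) = 0 := by
      intro x hx
      have hx' : ∀ p ∈ I, eval x p = 0 := fun p hp => by
          have := mem_zeroLocus_iff.1 hx p hp; exact this
      set x' : Cd d := WithLp.toLp 2 x with hx'def
      set c : ℝ := (1 + ‖x'‖)⁻¹ with hcdef
      have hnx : (0:ℝ) ≤ ‖x'‖ := norm_nonneg _
      have hc0 : 0 < c := by positivity
      have hlt : c * ‖x'‖ < 1 := by
        rw [hcdef]
        rw [inv_mul_lt_iff₀ (by positivity)]
        linarith
      have hmemball : (c:ℂ) • x' ∈ CBall d := by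
        rw [Metric.mem_closedBall, dist_zero_right, norm_smul, Complex.norm_real,
          Real.norm_eq_abs, abs_of_pos hc0]
        exact hlt.le
      set z : CBall d := ⟨(c:ℂ) • x', hmemball⟩ with hzdef
      have hzcoord : (fun i => (z : Cd d) i) = fun i => (c:ℂ) * x i := rfl
      have hznorm : ‖(z : Cd d)‖ < 1 := by
        show ‖(c:ℂ) • x'‖ < 1
        rw [norm_smul, Complex.norm_real, Real.norm_eq_abs, abs_of_pos hc0]
        exact hlt
      have hzV : ∀ p ∈ I, eval (fun i => (z : Cd d) i) p = 0 := by
        intro p hp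
        rw [hzcoord]
        exact zero_cone hhom x hx' (c:ℂ) p hp
      have h0 : Stmt14Aux.Fk d k f z = 0 := hFkvanish k z hznorm hzV
      rw [← hkmap k, polyMap_apply, hzcoord, eval_smul_hom (hkhom k)] at h0
      have hcne : ((c:ℂ))^k ≠ 0 := pow_ne_zero _ (by
        simp only [ne_eq, Complex.ofReal_eq_zero]
        exact ne_of_gt hc0)
      rcases mul_eq_zero.1 h0 with h | h
      · exact absurd h hcne
      · exact h
    have h2 : hk k ∈ vanishingIdeal ℂ (zeroLocus ℂ I) :=
      mem_vanishingIdeal_iff.2 (fun x hx => by exact hvan x hx)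
    rwa [vanishingIdeal_zeroLocus_eq_radical, hrad.radical] at h2
  -- Step 3: assembly
  rw [Metric.mem_closure_iff]
  intro ε hε
  obtain ⟨p1, hp1⟩ := hball (ε/6) (by positivity)
  set N1 := p1.totalDegree + 1 with hN1
  set M : ℝ := ∑ k ∈ Finset.range N1, (k:ℝ) * ‖polyMap d (homogeneousComponent k p1)‖ with hM
  have hM0 : 0 ≤ M := Finset.sum_nonneg (fun k _ => mul_nonneg (Nat.cast_nonneg k) (norm_nonneg _))
  set t : ℝ := max (1/2) (1 - ε/(6*(M+1))) with ht
  have ht0 : 0 ≤ t := le_trans (by norm_num) (le_max_left _ _)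
  have ht1 : t < 1 := by
    apply max_lt (by norm_num)
    have : 0 < ε/(6*(M+1)) := by positivity
    linarith
  have h1t : 0 < 1 - t := by linarith
  have htc : ‖((t:ℝ):ℂ)‖ ≤ 1 := by
    rw [Complex.norm_real, Real.norm_eq_abs, abs_of_nonneg ht0]
    exact ht1.le
  have ht2 : 1 - t ≤ ε/(6*(M+1)) := by
    have h := le_max_right (1/2 : ℝ) (1 - ε/(6*(M+1)))
    linarith [h.trans_eq ht.symm]
  -- dilation moves `polyMap p1` only a little
  have e1 : polyMap d p1 - dilateFn d ((t:ℝ):ℂ) htc (polyMap d p1)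
      = ∑ k ∈ Finset.range N1, ((1:ℂ) - ((t:ℝ):ℂ)^k) • polyMap d (homogeneousComponent k p1) := by
    have hstep : polyMap d p1 - dilateFn d ((t:ℝ):ℂ) htc (polyMap d p1)
        = (∑ k ∈ Finset.range N1, polyMap d (homogeneousComponent k p1))
          - ∑ k ∈ Finset.range N1, ((t:ℝ):ℂ)^k • polyMap d (homogeneousComponent k p1) := by
      congr 1
      · rw [← map_sum, sum_hc p1 (Nat.lt_succ_self _)]
      · exact dilate_poly _ htc p1 (Nat.lt_succ_self _)
    rw [hstep, ← Finset.sum_sub_distrib]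
    exact Finset.sum_congr rfl fun k _ => by rw [sub_smul, one_smul]
  have hd1 : ‖polyMap d p1 - dilateFn d ((t:ℝ):ℂ) htc (polyMap d p1)‖ ≤ ε/6 := by
    rw [e1]
    have hb : ∀ k ∈ Finset.range N1,
        ‖((1:ℂ) - ((t:ℝ):ℂ)^k) • polyMap d (homogeneousComponent k p1)‖
          ≤ (k:ℝ)*(1-t) * ‖polyMap d (homogeneousComponent k p1)‖ := by
      intro k _
      rw [norm_smul]
      apply mul_le_mul_of_nonneg_right _ (norm_nonneg _)
      have hcast : ((1:ℂ) - ((t:ℝ):ℂ)^k) = (((1 - t^k : ℝ)):ℂ) := by push_cast; ring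
      have htk1 : t ^ k ≤ 1 := pow_le_one₀ ht0 ht1.le
      rw [hcast, Complex.norm_real, Real.norm_eq_abs, abs_of_nonneg (by linarith)]
      have hber : 1 + (k:ℝ) * (t - 1) ≤ t ^ k := by
        have h := one_add_mul_le_pow (a := t - 1) (by linarith) k
        have he : (1 + (t - 1)) = t := by ring
        rwa [he] at h
      nlinarith
    calc ‖∑ k ∈ Finset.range N1, ((1:ℂ) - ((t:ℝ):ℂ)^k) • polyMap d (homogeneousComponent k p1)‖
        ≤ ∑ k ∈ Finset.range N1,
            ‖((1:ℂ) - ((t:ℝ):ℂ)^k) • polyMap d (homogeneousComponent k p1)‖ :=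
          norm_sum_le _ _
      _ ≤ ∑ k ∈ Finset.range N1, (k:ℝ)*(1-t) * ‖polyMap d (homogeneousComponent k p1)‖ :=
          Finset.sum_le_sum hb
      _ = (1-t) * M := by
          rw [hM, Finset.mul_sum]
          exact Finset.sum_congr rfl fun k _ => by ring
      _ ≤ (ε/(6*(M+1))) * M := mul_le_mul_of_nonneg_right ht2 hM0
      _ ≤ ε/6 := by
          rw [div_mul_eq_mul_div, div_le_div_iff₀ (by positivity) (by norm_num)]
          nlinarith
  have hdil_diff : ∀ g h : C(CBall d, ℂ),
      ‖dilateFn d ((t:ℝ):ℂ) htc g - dilateFn d ((t:ℝ):ℂ) htc h‖ ≤ ‖g - h‖ := by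
    intro g h
    rw [← dilate_sub]
    exact dilate_norm_le _ _ _
  have hd2 : ‖f - dilateFn d ((t:ℝ):ℂ) htc f‖ < ε/2 := by
    have hdec : f - dilateFn d ((t:ℝ):ℂ) htc f
        = ((f - polyMap d p1) + (polyMap d p1 - dilateFn d ((t:ℝ):ℂ) htc (polyMap d p1)))
          + (dilateFn d ((t:ℝ):ℂ) htc (polyMap d p1) - dilateFn d ((t:ℝ):ℂ) htc f) := by
      abel
    rw [hdec]
    have h3 : ‖dilateFn d ((t:ℝ):ℂ) htc (polyMap d p1) - dilateFn d ((t:ℝ):ℂ) htc f‖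
        ≤ ‖f - polyMap d p1‖ := by
      refine le_trans (hdil_diff _ _) ?_
      rw [norm_sub_rev]
    calc ‖((f - polyMap d p1) + (polyMap d p1 - dilateFn d ((t:ℝ):ℂ) htc (polyMap d p1)))
          + (dilateFn d ((t:ℝ):ℂ) htc (polyMap d p1) - dilateFn d ((t:ℝ):ℂ) htc f)‖
        ≤ ‖(f - polyMap d p1) + (polyMap d p1 - dilateFn d ((t:ℝ):ℂ) htc (polyMap d p1))‖
          + ‖dilateFn d ((t:ℝ):ℂ) htc (polyMap d p1) - dilateFn d ((t:ℝ):ℂ) htc f‖ :=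
          norm_add_le _ _
      _ ≤ (‖f - polyMap d p1‖ + ‖polyMap d p1 - dilateFn d ((t:ℝ):ℂ) htc (polyMap d p1)‖)
          + ‖dilateFn d ((t:ℝ):ℂ) htc (polyMap d p1) - dilateFn d ((t:ℝ):ℂ) htc f‖ := by
          gcongr
          exact norm_add_le _ _
      _ < ε/2 := by linarith
  -- now approximate `f_t` by elements of the ideal
  obtain ⟨p2, hp2⟩ := hball ((ε/4) * (1-t)) (by positivity)
  set N2 := p2.totalDegree + 1 with hN2
  set q : MvPolynomial (Fin d) ℂ
      := ∑ k ∈ Finset.range N2, MvPolynomial.C (((t:ℝ):ℂ)^k) * hk k with hq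
  have hqI : q ∈ I := Submodule.sum_mem _ (fun k _ => I.mul_mem_left _ (hkI k))
  refine ⟨polyMap d q, ⟨q, hqI, rfl⟩, ?_⟩
  rw [dist_eq_norm]
  set δ := ‖f - polyMap d p2‖ with hδ
  have hδ0 : 0 ≤ δ := norm_nonneg _
  have hqmap : polyMap d q = ∑ k ∈ Finset.range N2, ((t:ℝ):ℂ)^k • Stmt14Aux.Fk d k f := by
    rw [hq, map_sum]
    exact Finset.sum_congr rfl fun k _ => by rw [polyMap_C_mul, hkmap]
  have e2 : dilateFn d ((t:ℝ):ℂ) htc (polyMap d p2) - polyMap d q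
      = ∑ k ∈ Finset.range N2,
          ((t:ℝ):ℂ)^k • (Stmt14Aux.Fk d k (polyMap d p2) - Stmt14Aux.Fk d k f) := by
    rw [dilate_poly _ htc p2 (Nat.lt_succ_self _), hqmap, ← Finset.sum_sub_distrib]
    exact Finset.sum_congr rfl fun k _ => by rw [Fk_polyMap, smul_sub]
  have hgeo : ∑ k ∈ Finset.range N2, t^k ≤ (1-t)⁻¹ := by
    have hg := geom_sum_mul t N2
    have h1 : (∑ k ∈ Finset.range N2, t^k) * (1-t) ≤ 1 := by nlinarith [pow_nonneg ht0 N2]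
    calc (∑ k ∈ Finset.range N2, t^k)
        = ((∑ k ∈ Finset.range N2, t^k) * (1-t)) * (1-t)⁻¹ := by field_simp
      _ ≤ 1 * (1-t)⁻¹ := mul_le_mul_of_nonneg_right h1 (by positivity)
      _ = (1-t)⁻¹ := one_mul _
  have hd3 : ‖dilateFn d ((t:ℝ):ℂ) htc (polyMap d p2) - polyMap d q‖ ≤ (1-t)⁻¹ * δ := by
    rw [e2]
    have hb2 : ∀ k ∈ Finset.range N2,
        ‖((t:ℝ):ℂ)^k • (Stmt14Aux.Fk d k (polyMap d p2) - Stmt14Aux.Fk d k f)‖ ≤ t^k * δ := by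
      intro k _
      rw [norm_smul]
      have hnorm : ‖((t:ℝ):ℂ)^k‖ = t^k := by
        have : ((t:ℝ):ℂ)^k = (((t^k : ℝ)):ℂ) := by push_cast; ring
        rw [this, Complex.norm_real, Real.norm_eq_abs, abs_of_nonneg (pow_nonneg ht0 k)]
      rw [hnorm]
      apply mul_le_mul_of_nonneg_left _ (pow_nonneg ht0 k)
      rw [← Fk_sub]
      refine le_trans (norm_Fk_le d k _) ?_
      rw [norm_sub_rev]
    calc ‖∑ k ∈ Finset.range N2,
            ((t:ℝ):ℂ)^k • (Stmt14Aux.Fk d k (polyMap d p2) - Stmt14Aux.Fk d k f)‖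
        ≤ ∑ k ∈ Finset.range N2,
            ‖((t:ℝ):ℂ)^k • (Stmt14Aux.Fk d k (polyMap d p2) - Stmt14Aux.Fk d k f)‖ :=
          norm_sum_le _ _
      _ ≤ ∑ k ∈ Finset.range N2, t^k * δ := Finset.sum_le_sum hb2
      _ = (∑ k ∈ Finset.range N2, t^k) * δ := by rw [← Finset.sum_mul]
      _ ≤ (1-t)⁻¹ * δ := mul_le_mul_of_nonneg_right hgeo hδ0
  have hfinal : ‖f - polyMap d q‖
      ≤ ‖f - dilateFn d ((t:ℝ):ℂ) htc f‖
        + ‖dilateFn d ((t:ℝ):ℂ) htc f - dilateFn d ((t:ℝ):ℂ) htc (polyMap d p2)‖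
        + ‖dilateFn d ((t:ℝ):ℂ) htc (polyMap d p2) - polyMap d q‖ := by
    have hdec : f - polyMap d q
        = ((f - dilateFn d ((t:ℝ):ℂ) htc f)
            + (dilateFn d ((t:ℝ):ℂ) htc f - dilateFn d ((t:ℝ):ℂ) htc (polyMap d p2)))
          + (dilateFn d ((t:ℝ):ℂ) htc (polyMap d p2) - polyMap d q) := by abel
    rw [hdec]
    refine le_trans (norm_add_le _ _) ?_
    gcongr
    exact norm_add_le _ _
  have hmid : ‖dilateFn d ((t:ℝ):ℂ) htc f - dilateFn d ((t:ℝ):ℂ) htc (polyMap d p2)‖ ≤ δ :=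
    hdil_diff _ _
  have hd3' : (1-t)⁻¹ * δ < ε/4 := by
    have : (1-t)⁻¹ * δ < (1-t)⁻¹ * ((ε/4) * (1-t)) := by
      apply mul_lt_mul_of_pos_left hp2 (by positivity)
    calc (1-t)⁻¹ * δ < (1-t)⁻¹ * ((ε/4) * (1-t)) := this
      _ = ε/4 := by field_simp
  have hδ' : δ < ε/4 := by
    calc δ < (ε/4) * (1-t) := hp2
      _ ≤ (ε/4) * 1 := by
          apply mul_le_mul_of_nonneg_left (by linarith) (by positivity)
      _ = ε/4 := mul_one _
  calc ‖f - polyMap d q‖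
      ≤ ‖f - dilateFn d ((t:ℝ):ℂ) htc f‖
        + ‖dilateFn d ((t:ℝ):ℂ) htc f - dilateFn d ((t:ℝ):ℂ) htc (polyMap d p2)‖
        + ‖dilateFn d ((t:ℝ):ℂ) htc (polyMap d p2) - polyMap d q‖ := hfinal
    _ < ε := by linarith
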